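/- Let n_z ≥ 1 and n_s ≥ n_z be natural numbers and let 𝒳 be a nonempty set. Let p, q : 𝒳 → ℝ^{n_z} be functions such that p(x) and q(x) are probability vectors for every x ∈ 𝒳. Let M_P, M_Q ∈ ℝ^{n_z × n_s} be row-stochastic matrices, each of rank n_z. Assume: (i) M_P^⊤ p(x) = M_Q^⊤ q(x) for all x ∈ 𝒳; (ii) for each i ∈ {1,…,n_z} there exists x ∈ 𝒳 with p_i(x) = 1, and there exists x ∈ 𝒳 with q_i(x) = 1. Then there exists a permutation π of {1,…,n_z} such that for every i ∈ {1,…,n_z} and every x ∈ 𝒳, p_i(x) = q_{π(i)}(x). -/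
import Mathlib


open Matrix

lemma probvec_single {n : ℕ} (v : Fin n → ℝ) (hnn : ∀ j, 0 ≤ v j)
    (hsum : ∑ j, v j = 1) (i : Fin n) (hi : v i = 1) :
    ∀ j, j ≠ i → v j = 0 := by
  have h1 : v i + ∑ k ∈ Finset.univ.erase i, v k = 1 := by
    rw [Finset.add_sum_erase _ v (Finset.mem_univ i)]; exact hsum
  have h0 : ∑ k ∈ Finset.univ.erase i, v k = 0 := by linarith
  intro j hj
  have := (Finset.sum_eq_zero_iff_of_nonneg (fun k _ => hnn k)).mp h0
  exact this j (Finset.mem_erase.mpr ⟨hj, Finset.mem_univ j⟩)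

lemma mulVec_transpose_injective {m n : ℕ} (M : Matrix (Fin m) (Fin n) ℝ)
    (h : M.rank = m) : Function.Injective (fun v : Fin m → ℝ => Mᵀ *ᵥ v) := by
  have hr : Mᵀ.rank = m := by rw [Matrix.rank_transpose]; exact h
  have h1 := Mᵀ.mulVecLin.finrank_range_add_finrank_ker
  rw [Matrix.rank] at hr
  have hdom : Module.finrank ℝ (Fin m → ℝ) = m := by simp
  have hk0 : Module.finrank ℝ (LinearMap.ker Mᵀ.mulVecLin) = 0 := by omega
  have hker : LinearMap.ker Mᵀ.mulVecLin = ⊥ := Submodule.finrank_eq_zero.mp hk0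
  have hinj := LinearMap.ker_eq_bot.mp hker
  intro u v huv
  exact hinj (by simpa [Matrix.mulVecLin_apply, Matrix.mulVec_transpose] using huv)

/-- **Corollary 1 (Full identifiability).**
If two latent-variable models `(p, M_P)` and `(q, M_Q)` induce the same observed
conditional distribution of the proxy given the covariates, and both satisfy the
weak overlap assumption with parameter `η = 1` (for each latent class there is a
point where its posterior equals 1), then their posteriors agree exactly up to a
permutation of latent classes. -/
theorem full_identifiability
    (n_z n_s : ℕ) (hnz : 1 ≤ n_z) (hns : n_z ≤ n_s)
    (𝒳 : Type*) [Nonempty 𝒳]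
    (p q : 𝒳 → Fin n_z → ℝ)
    (hp_nonneg : ∀ x i, 0 ≤ p x i) (hp_sum : ∀ x, ∑ i, p x i = 1)
    (hq_nonneg : ∀ x i, 0 ≤ q x i) (hq_sum : ∀ x, ∑ i, q x i = 1)
    (MP MQ : Matrix (Fin n_z) (Fin n_s) ℝ)
    (hMP_nonneg : ∀ z s, 0 ≤ MP z s) (hMP_rowsum : ∀ z, ∑ s, MP z s = 1)
    (hMQ_nonneg : ∀ z s, 0 ≤ MQ z s) (hMQ_rowsum : ∀ z, ∑ s, MQ z s = 1)
    (hMP_rank : MP.rank = n_z) (hMQ_rank : MQ.rank = n_z)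
    (hobs : ∀ x, MP.transpose *ᵥ p x = MQ.transpose *ᵥ q x)
    (hoverlap_p : ∀ i, ∃ x, p x i = 1)
    (hoverlap_q : ∀ i, ∃ x, q x i = 1) :
    ∃ π : Equiv.Perm (Fin n_z), ∀ i : Fin n_z, ∀ x : 𝒳,
      p x i = q x (π i) := by
  classical
  -- choose overlap points
  choose xp hxp using hoverlap_p
  choose xq hxq using hoverlap_q
  have hp0 : ∀ i j, j ≠ i → p (xp i) j = 0 := fun i =>
    probvec_single _ (hp_nonneg _) (hp_sum _) i (hxp i)
  have hq0 : ∀ i j, j ≠ i → q (xq i) j = 0 := fun i =>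
    probvec_single _ (hq_nonneg _) (hq_sum _) i (hxq i)
  -- mixing matrices
  set A : Matrix (Fin n_z) (Fin n_z) ℝ := fun i j => q (xp i) j with hA
  set B : Matrix (Fin n_z) (Fin n_z) ℝ := fun j i => p (xq j) i with hB
  -- MP = A * MQ
  have hMP_eq : MP = A * MQ := by
    ext i s
    have h := congrFun (hobs (xp i)) s
    have hL : (MPᵀ *ᵥ p (xp i)) s = MP i s := by
      simp only [Matrix.mulVec, dotProduct, Matrix.transpose_apply]
      rw [Finset.sum_eq_single i (fun b _ hb => by rw [hp0 i b hb, mul_zero])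
        (fun h => absurd (Finset.mem_univ i) h)]
      rw [hxp i, mul_one]
    have hR : (MQᵀ *ᵥ q (xp i)) s = ∑ j, A i j * MQ j s := by
      simp only [Matrix.mulVec, dotProduct, Matrix.transpose_apply, hA]
      exact Finset.sum_congr rfl fun j _ => mul_comm _ _
    rw [Matrix.mul_apply, ← hR, ← h, hL]
  -- MQ = B * MP
  have hMQ_eq : MQ = B * MP := by
    ext j s
    have h := congrFun (hobs (xq j)) s
    have hL : (MQᵀ *ᵥ q (xq j)) s = MQ j s := by
      simp only [Matrix.mulVec, dotProduct, Matrix.transpose_apply]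
      rw [Finset.sum_eq_single j (fun b _ hb => by rw [hq0 j b hb, mul_zero])
        (fun h => absurd (Finset.mem_univ j) h)]
      rw [hxq j, mul_one]
    have hR : (MPᵀ *ᵥ p (xq j)) s = ∑ i, B j i * MP i s := by
      simp only [Matrix.mulVec, dotProduct, Matrix.transpose_apply, hB]
      exact Finset.sum_congr rfl fun i _ => mul_comm _ _
    rw [Matrix.mul_apply, ← hR, h, hL]
  -- cancellation: A * B = 1
  have hinjP := mulVec_transpose_injective MP hMP_rank
  have hinjQ := mulVec_transpose_injective MQ hMQ_rank
  have hABMP : (A * B) * MP = (1 : Matrix (Fin n_z) (Fin n_z) ℝ) * MP := by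
    rw [Matrix.mul_assoc, ← hMQ_eq, ← hMP_eq, Matrix.one_mul]
  have hAB : A * B = 1 := by
    ext i j
    have hrow : (A * B) i = (1 : Matrix (Fin n_z) (Fin n_z) ℝ) i := by
      have : MPᵀ *ᵥ ((A * B) i) = MPᵀ *ᵥ ((1 : Matrix (Fin n_z) (Fin n_z) ℝ) i) := by
        have h1 : ∀ (N : Matrix (Fin n_z) (Fin n_z) ℝ), MPᵀ *ᵥ (N i) = (N * MP) i := by
          intro N
          funext s
          simp [Matrix.mulVec, dotProduct, Matrix.mul_apply, mul_comm]
        rw [h1, h1, hABMP]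
      exact hinjP this
    exact congrFun hrow j
  -- entrywise facts about A and B
  have hA_nonneg : ∀ i j, 0 ≤ A i j := fun i j => hq_nonneg _ _
  have hB_nonneg : ∀ j i, 0 ≤ B j i := fun j i => hp_nonneg _ _
  have hA_rowsum : ∀ i, ∑ j, A i j = 1 := fun i => hq_sum _
  have hB_rowsum : ∀ j, ∑ i, B j i = 1 := fun j => hp_sum _
  have hB_le_one : ∀ j i, B j i ≤ 1 := by
    intro j i
    calc B j i ≤ ∑ k, B j k :=
          Finset.single_le_sum (fun k _ => hB_nonneg j k) (Finset.mem_univ i)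
      _ = 1 := hB_rowsum j
  -- each row of A has a nonzero entry
  have hA_supp : ∀ i, ∃ k, A i k ≠ 0 := by
    intro i
    by_contra h
    push_neg at h
    have : (1 : ℝ) = 0 := by
      rw [← hA_rowsum i]; exact Finset.sum_eq_zero fun k _ => h k
    norm_num at this
  choose f hf using hA_supp
  have hf_pos : ∀ i, 0 < A i (f i) := fun i => lt_of_le_of_ne (hA_nonneg i (f i)) (Ne.symm (hf i))
  -- B (f i) i = 1
  have hBfi : ∀ i, B (f i) i = 1 := by
    intro i
    have hABii : ∑ k, A i k * B k i = 1 := by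
      have := congrFun (congrFun hAB i) i
      simpa [Matrix.mul_apply, Matrix.one_apply] using this
    have hzero : ∑ k, A i k * (1 - B k i) = 0 := by
      have : ∑ k, A i k * (1 - B k i) = (∑ k, A i k) - ∑ k, A i k * B k i := by
        rw [← Finset.sum_sub_distrib]
        exact Finset.sum_congr rfl fun k _ => by ring
      rw [this, hA_rowsum i, hABii, sub_self]
    have hterm := (Finset.sum_eq_zero_iff_of_nonneg
      (fun k _ => mul_nonneg (hA_nonneg i k) (by linarith [hB_le_one k i]))).mp hzero
      (f i) (Finset.mem_univ (f i))
    have := mul_eq_zero.mp hterm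
    rcases this with h | h
    · exact absurd h (hf i)
    · linarith
  -- B (f i) j = 0 for j ≠ i
  have hBf0 : ∀ i j, j ≠ i → B (f i) j = 0 := fun i =>
    probvec_single _ (hB_nonneg (f i)) (hB_rowsum (f i)) i (hBfi i)
  -- f is injective, hence a permutation
  have hf_inj : Function.Injective f := by
    intro i i' hii
    by_contra hne
    have h1 := hBfi i
    have h0 := hBf0 i' i (hne)
    rw [hii, h0] at h1
    norm_num at h1
  have hf_bij : Function.Bijective f :=
    (Fintype.bijective_iff_injective_and_card f).mpr ⟨hf_inj, rfl⟩
  let σ : Equiv.Perm (Fin n_z) := Equiv.ofBijective f hf_bij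
  -- p x = Bᵀ *ᵥ q x
  have hpq : ∀ x, p x = Bᵀ *ᵥ q x := by
    intro x
    apply hinjP
    show MPᵀ *ᵥ p x = MPᵀ *ᵥ (Bᵀ *ᵥ q x)
    rw [Matrix.mulVec_mulVec, ← Matrix.transpose_mul, ← hMQ_eq]
    exact hobs x
  refine ⟨σ, fun i x => ?_⟩
  have hrow : ∀ j, j ≠ f i → B j i = 0 := by
    intro j hj
    have : σ.symm j ≠ i := by
      intro h
      apply hj
      have : j = σ (σ.symm j) := (σ.apply_symm_apply j).symm
      rw [this, h]; rfl
    have hj' : j = f (σ.symm j) := (σ.apply_symm_apply j).symm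
    rw [hj']
    exact hBf0 (σ.symm j) i (fun h => this h.symm)
  have : p x i = ∑ j, B j i * q x j := by
    rw [hpq x]
    simp only [Matrix.mulVec, dotProduct, Matrix.transpose_apply]
  rw [this, Finset.sum_eq_single (f i)
    (fun b _ hb => by rw [hrow b hb, zero_mul])
    (fun h => absurd (Finset.mem_univ (f i)) h)]
  rw [hBfi i, one_mul]
  rfl
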